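/- The map $(t^1,t^2,t^3,t^4) \mapsto (y^1,y^2,y^3,y^4)$ given by $y^1 = t^1$, $y^2 = t^2 + \frac{(t^1)^2}{8}$, $y^3 = t^3 t^4$, $y^4 = (t^4)^4$ transforms the bilinear form $\eta^{ij} = \partial g^{ij}/\partial y^2$ (where $g_{(4)}$ is the explicit $B_4$ matrix with entries $g^{11}=4y^1$, $g^{12}=8y^2$, $g^{13}=12y^3$, $g^{14}=16y^4$, $g^{22}=4y^1y^2+12y^3$, $g^{23}=8y^1y^3+16y^4$, $g^{24}=12y^1y^4$, $g^{33}=4y^2y^3+12y^1y^4$, $g^{34}=8y^2y^4$, $g^{44}=4y^3y^4$, symmetric) into a constant matrix in the coordinates $t^1,\dots,t^4$ on the locus $t^4 \ne 0$. That is, $\tilde\eta^{\alpha\beta} := \sum_{i,j}\frac{\partial t^\alpha}{\partial y^i}\frac{\partial t^\beta}{\partial y^j}\,\eta^{ij}$ has constant entries. -/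

import Mathlib

/-- Partial derivative in the `i`-th coordinate direction. -/
noncomputable def pd {n : ℕ} (i : Fin n) (f : (Fin n → ℝ) → ℝ) : (Fin n → ℝ) → ℝ :=
  fun x => fderiv ℝ f x (Pi.single i 1)

/-- The explicit `B_4` orbit-space metric `g_{(4)}` in the coordinates `y^1, …, y^4`
(`y i` stands for `y^{i+1}`). -/
noncomputable def g4 (y : Fin 4 → ℝ) : Matrix (Fin 4) (Fin 4) ℝ :=
  !![4*y 0,  8*y 1,              12*y 2,                    16*y 3;
     8*y 1,  4*y 0*y 1+12*y 2,   8*y 0*y 2+16*y 3,          12*y 0*y 3;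
     12*y 2, 8*y 0*y 2+16*y 3,   4*y 1*y 2+12*y 0*y 3,      8*y 1*y 3;
     16*y 3, 12*y 0*y 3,         8*y 1*y 3,                 4*y 2*y 3]

/-- `η^{ij} = ∂g_{(4)}^{ij}/∂y^2`. -/
noncomputable def eta4 (y : Fin 4 → ℝ) : Matrix (Fin 4) (Fin 4) ℝ :=
  fun i j => fderiv ℝ (fun z : Fin 4 → ℝ => g4 z i j) y (Pi.single 1 1)

/-- The change of coordinates `t ↦ y` of the `B_{2,4}` structure:
`y^1 = t^1`, `y^2 = t^2 + (t^1)²/8`, `y^3 = t^3 t^4`, `y^4 = (t^4)⁴`. -/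
noncomputable def phi4 (t : Fin 4 → ℝ) : Fin 4 → ℝ :=
  ![t 0, t 1 + (t 0) ^ 2 / 8, t 2 * t 3, (t 3) ^ 4]

/-- Jacobian matrix `J_{iα} = ∂y^i/∂t^α` of `phi4`. -/
noncomputable def J4 (t : Fin 4 → ℝ) : Matrix (Fin 4) (Fin 4) ℝ :=
  fun i a => fderiv ℝ (fun s : Fin 4 → ℝ => phi4 s i) t (Pi.single a 1)

open ContinuousLinearMap in
lemma hproj (i : Fin 4) (t : Fin 4 → ℝ) :
    HasFDerivAt (fun s : Fin 4 → ℝ => s i)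
      (ContinuousLinearMap.proj (R := ℝ) (φ := fun _ : Fin 4 => ℝ) i) t :=
  hasFDerivAt_apply i t

lemma J4_eq (t : Fin 4 → ℝ) :
    J4 t = !![(1:ℝ),0,0,0; t 0/4,1,0,0; 0,0,t 3,t 2; 0,0,0,4*t 3^3] := by
  have e1 := (hproj 1 t).add (((hproj 0 t).mul (hproj 0 t)).mul_const (8:ℝ)⁻¹)
  simp only [Pi.add_def, Pi.mul_def] at e1
  rw [show (fun s : Fin 4 → ℝ => s 1 + s 0 * s 0 * (8:ℝ)⁻¹)
      = (fun s : Fin 4 → ℝ => s 1 + s 0 ^ 2 / 8) from funext fun s => by ring] at e1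
  have e2 := ((hproj 2 t).mul (hproj 3 t))
  have e3 := ((hproj 3 t).mul (hproj 3 t)).mul ((hproj 3 t).mul (hproj 3 t))
  simp only [Pi.mul_def] at e2 e3
  rw [show (fun s : Fin 4 → ℝ => s 3 * s 3 * (s 3 * s 3))
      = (fun s : Fin 4 → ℝ => s 3 ^ 4) from funext fun s => by ring] at e3
  ext i a
  fin_cases i <;> fin_cases a <;>
    norm_num [J4, phi4] <;>
    first
      | (rw [(hproj 0 t).fderiv]; simp [Pi.single_apply])
      | (rw [e1.fderiv]; simp [Pi.single_apply]; try ring)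
      | (rw [e2.fderiv]; simp [Pi.single_apply]; try ring)
      | (rw [e3.fderiv]; simp [Pi.single_apply]; try ring)

lemma eta4_eq (y : Fin 4 → ℝ) :
    eta4 y = !![(0:ℝ),8,0,0; 8,4*y 0,0,0; 0,0,4*y 2,8*y 3; 0,0,8*y 3,0] := by
  have a00 := (hproj 0 y).const_mul (4:ℝ)
  have a01 := (hproj 1 y).const_mul (8:ℝ)
  have a02 := (hproj 2 y).const_mul (12:ℝ)
  have a03 := (hproj 3 y).const_mul (16:ℝ)
  have a11 := (((hproj 0 y).const_mul (4:ℝ)).mul (hproj 1 y)).add ((hproj 2 y).const_mul (12:ℝ))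
  have a12 := (((hproj 0 y).const_mul (8:ℝ)).mul (hproj 2 y)).add ((hproj 3 y).const_mul (16:ℝ))
  have a13 := ((hproj 0 y).const_mul (12:ℝ)).mul (hproj 3 y)
  have a22 := (((hproj 1 y).const_mul (4:ℝ)).mul (hproj 2 y)).add
    (((hproj 0 y).const_mul (12:ℝ)).mul (hproj 3 y))
  have a23 := ((hproj 1 y).const_mul (8:ℝ)).mul (hproj 3 y)
  have a33 := ((hproj 2 y).const_mul (4:ℝ)).mul (hproj 3 y)
  simp only [Pi.add_def, Pi.mul_def] at a11 a12 a13 a22 a23 a33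
  ext i j
  fin_cases i <;> fin_cases j <;>
    norm_num [eta4, g4] <;>
    first
      | (rw [a00.fderiv]; simp [Pi.single_apply]; try ring)
      | (rw [a01.fderiv]; simp [Pi.single_apply]; try ring)
      | (rw [a02.fderiv]; simp [Pi.single_apply]; try ring)
      | (rw [a03.fderiv]; simp [Pi.single_apply]; try ring)
      | (rw [a11.fderiv]; simp [Pi.single_apply]; try ring)
      | (rw [a12.fderiv]; simp [Pi.single_apply]; try ring)
      | (rw [a13.fderiv]; simp [Pi.single_apply]; try ring)
      | (rw [a22.fderiv]; simp [Pi.single_apply]; try ring)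
      | (rw [a23.fderiv]; simp [Pi.single_apply]; try ring)
      | (rw [a33.fderiv]; simp [Pi.single_apply]; try ring)

lemma J4_inv (t : Fin 4 → ℝ) (ht : t 3 ≠ 0) :
    (J4 t)⁻¹ = !![(1:ℝ),0,0,0; -t 0/4,1,0,0; 0,0,1/t 3,-t 2/(4*t 3^4); 0,0,0,1/(4*t 3^3)] := by
  apply Matrix.inv_eq_right_inv
  rw [J4_eq]
  ext i j
  fin_cases i <;> fin_cases j <;>
    simp only [Matrix.mul_apply, Fin.sum_univ_four, Matrix.one_apply, Matrix.cons_val_zero,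
      Matrix.cons_val_one, Matrix.head_cons, Matrix.cons_val_two, Matrix.tail_cons,
      Matrix.cons_val_three, Matrix.cons_val', Matrix.empty_val', Matrix.cons_val_fin_one,
      Matrix.head_fin_const] <;>
    (try norm_num [Fin.ext_iff]) <;> (try field_simp) <;> (try ring) <;>
    (try simp [Matrix.vecHead, Matrix.vecTail]) <;> field_simp <;> ring

set_option maxHeartbeats 1000000 in
/-- The listed coordinates are flat for `η`: the pullback
`η̃^{αβ} = ∑_{i,j} (∂t^α/∂y^i)(∂t^β/∂y^j) η^{ij}` (with `∂t/∂y = J⁻¹`) is a constant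
matrix on the locus `t^4 ≠ 0`. -/
theorem stmt11 :
    ∃ c : Matrix (Fin 4) (Fin 4) ℝ, ∀ t : Fin 4 → ℝ, t 3 ≠ 0 →
      (J4 t)⁻¹ * eta4 (phi4 t) * ((J4 t)⁻¹).transpose = c := by
  use !![(0:ℝ),8,0,0; 8,0,0,0; 0,0,0,2; 0,0,2,0]
  intro t ht
  rw [J4_inv t ht, eta4_eq]
  ext i j
  fin_cases i <;> fin_cases j <;>
    simp only [phi4, Matrix.mul_apply, Fin.sum_univ_four, Matrix.transpose_apply,
      Matrix.cons_val_zero, Matrix.cons_val_one, Matrix.head_cons, Matrix.cons_val_two,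
      Matrix.tail_cons, Matrix.cons_val_three, Matrix.cons_val', Matrix.empty_val',
      Matrix.cons_val_fin_one, Matrix.head_fin_const] <;>
    (try norm_num [Matrix.vecHead, Matrix.vecTail]) <;> (try field_simp) <;> (try ring)
  all_goals simp [Matrix.vecHead, Matrix.vecTail]
  all_goals field_simp
  all_goals ring
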